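/- arXiv:2206.01383 — 2 statements merged into one kernel-verified Lean document; each statement's English description precedes it below -/
import Mathlib

section
/- If p : Y → X is a local homeomorphism and X is simply connected and locally path-connected, and p is a covering map, then p is a trivial covering: Y is homeomorphic over X to a disjoint union of copies of X indexed by a fiber. -/
open Set Topology unitInterval

namespace CoveringTrivAux

variable {Y X : Type*} [TopologicalSpace Y] [TopologicalSpace X] {p : Y → X}
variable {A : Type*} [TopologicalSpace A] {H : A × I → X} {f : A → Y}

lemma ext_step (hH : Continuous H)
    {F : Type*} [TopologicalSpace F] (e : Bundle.Trivialization F p)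
    {N : Set A} {c d : I} (hcd : c ≤ d)
    (hbase : ∀ b ∈ N, ∀ s : I, s ∈ Icc c d → H (b, s) ∈ e.baseSet)
    {L : A × I → Y} (hL : ContinuousOn L (N ×ˢ univ))
    (hlift : ∀ b ∈ N, ∀ s ≤ c, p (L (b, s)) = H (b, s))
    (hbot : ∀ b ∈ N, L (b, 0) = f b) :
    ∃ L' : A × I → Y, ContinuousOn L' (N ×ˢ univ) ∧
      (∀ b ∈ N, ∀ s ≤ d, p (L' (b, s)) = H (b, s)) ∧ (∀ b ∈ N, L' (b, 0) = f b) := by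
  classical
  set q : A × I → I := fun z => min (max z.2 c) d with hq_def
  have hq : Continuous q := (continuous_snd.max continuous_const).min continuous_const
  have hqmem : ∀ z : A × I, q z ∈ Icc c d :=
    fun z => ⟨le_min (le_max_right _ _) hcd, min_le_right _ _⟩
  have hsrc : ∀ b ∈ N, L (b, c) ∈ e.source := fun b hb => by
    rw [e.mem_source, hlift b hb c le_rfl]
    exact hbase b hb c ⟨le_rfl, hcd⟩
  set g : A × I → Y :=
    fun z => e.toPartialHomeomorph.symm (H (z.1, q z), (e (L (z.1, c))).2) with hg_def
  have hLc : ContinuousOn (fun z : A × I => L (z.1, c)) (N ×ˢ univ) := by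
    refine hL.comp (continuous_fst.prodMk continuous_const).continuousOn ?_
    intro z hz
    exact ⟨(mem_prod.1 hz).1, mem_univ _⟩
  have hg_cont : ContinuousOn g (N ×ˢ univ) := by
    refine e.toPartialHomeomorph.continuousOn_symm.comp ?_ ?_
    · refine ContinuousOn.prodMk ?_ ?_
      · exact (hH.comp (continuous_fst.prodMk hq)).continuousOn
      · refine continuous_snd.comp_continuousOn
          (e.toPartialHomeomorph.continuousOn.comp hLc fun z hz => hsrc z.1 (mem_prod.1 hz).1)
    · intro z hz
      rw [e.target_eq]
      exact ⟨hbase z.1 (mem_prod.1 hz).1 (q z) (hqmem z), mem_univ _⟩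
  refine ⟨fun z => if (z.2 : ℝ) ≤ (c : ℝ) then L z else g z, ?_, ?_, ?_⟩
  · refine ContinuousOn.if ?_ (hL.mono inter_subset_left) (hg_cont.mono inter_subset_left)
    rintro ⟨b, s⟩ ⟨hz, hfr⟩
    have hb : b ∈ N := (mem_prod.1 hz).1
    have hsc : s = c := by
      have := frontier_le_subset_eq (α := ℝ)
        (f := fun z : A × I => (z.2 : ℝ)) (g := fun _ => (c : ℝ))
        (continuous_subtype_val.comp continuous_snd) continuous_const hfr
      exact Subtype.ext this
    subst hsc
    have hqc : q (b, s) = s := by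
      simp only [hq_def]
      rw [max_self, min_eq_left hcd]
    rw [hg_def]
    simp only [hqc]
    rw [← hlift b hb s le_rfl]
    exact (e.symm_apply_mk_proj (hsrc b hb)).symm
  · intro b hb s hs
    by_cases h : (s : ℝ) ≤ (c : ℝ)
    · show p (if (s:ℝ) ≤ (c:ℝ) then L (b,s) else g (b,s)) = H (b,s)
      rw [if_pos h]
      exact hlift b hb s h
    · show p (if (s:ℝ) ≤ (c:ℝ) then L (b,s) else g (b,s)) = H (b,s)
      rw [if_neg h]
      have hcs : c ≤ s := le_of_lt (Subtype.coe_lt_coe.1 (not_le.1 h))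
      have hqs : q (b, s) = s := by
        simp only [hq_def]
        rw [max_eq_left hcs, min_eq_left hs]
      rw [hg_def]
      simp only [hqs]
      exact e.proj_symm_apply (by rw [e.target_eq]; exact ⟨hbase b hb s ⟨hcs, hs⟩, mem_univ _⟩)
  · intro b hb
    show (if ((0:I):ℝ) ≤ (c:ℝ) then L (b,0) else g (b,0)) = f b
    rw [if_pos (by exact_mod_cast c.2.1 : ((0 : I) : ℝ) ≤ (c : ℝ))]
    exact hbot b hb

lemma local_lift (hp : IsCoveringMap p) (hH : Continuous H) (hf : Continuous f)
    (h0 : ∀ a, p (f a) = H (a, 0)) (a : A) :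
    ∃ N : Set A, IsOpen N ∧ a ∈ N ∧ ∃ L : A × I → Y, ContinuousOn L (N ×ˢ univ) ∧
      ∀ b ∈ N, (∀ t, p (L (b, t)) = H (b, t)) ∧ L (b, 0) = f b := by
  classical
  set T : Set I := {t | ∃ N : Set A, IsOpen N ∧ a ∈ N ∧ ∃ L : A × I → Y,
    ContinuousOn L (N ×ˢ univ) ∧ (∀ b ∈ N, ∀ s ≤ t, p (L (b, s)) = H (b, s)) ∧
    ∀ b ∈ N, L (b, 0) = f b} with hT_def
  have hdown : ∀ t ∈ T, ∀ t' ≤ t, t' ∈ T := by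
    rintro t ⟨N, hNo, haN, L, hL, hlift, hbot⟩ t' ht'
    exact ⟨N, hNo, haN, L, hL, fun b hb s hs => hlift b hb s (hs.trans ht'), hbot⟩
  have h0T : (0 : I) ∈ T := by
    refine ⟨univ, isOpen_univ, mem_univ _, fun z => f z.1,
      (hf.comp continuous_fst).continuousOn, ?_, fun b _ => rfl⟩
    intro b _ s hs
    show p (f b) = H (b, s)
    have hs0 : s = 0 := le_antisymm hs unitInterval.nonneg'
    rw [hs0]
    exact h0 b
  have hstep : ∀ t : I, ∃ ε > (0 : ℝ), ∀ c d : I, c ≤ d → c ∈ T →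
      (∀ s : I, s ∈ Icc c d → s ∈ Metric.ball t ε) → d ∈ T := by
    intro t
    by_cases hne : Nonempty ↥(p ⁻¹' {H (a, t)})
    swap
    · obtain ⟨-, U, hxU, hUo, -, Φ, -⟩ := hp (H (a, t))
      have hc : Continuous fun s : I => H (a, s) := hH.comp (by fun_prop)
      obtain ⟨ε, hε, hball⟩ :=
        Metric.mem_nhds_iff.1 (hc.continuousAt.preimage_mem_nhds (hUo.mem_nhds hxU))
      refine ⟨ε, hε, ?_⟩
      rintro c d hcd ⟨N, hNo, haN, L, hL, hlift, hbot⟩ hIcc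
      have hcU : H (a, c) ∈ U := hball (hIcc c ⟨le_rfl, hcd⟩)
      have hmemU : L (a, c) ∈ p ⁻¹' U := by
        show p (L (a, c)) ∈ U
        rw [hlift a haN c le_rfl]; exact hcU
      exact (hne ⟨(Φ ⟨L (a, c), hmemU⟩).2⟩).elim
    haveI := hne
    set e := (hp (H (a, t))).toTrivialization
    have hmem : H (a, t) ∈ e.baseSet := (hp (H (a, t))).mem_toTrivialization_baseSet
    have hW : H ⁻¹' e.baseSet ∈ 𝓝 (a, t) :=
      (e.open_baseSet.preimage hH).mem_nhds hmem
    obtain ⟨u, v, hu, hau, hv, htv, huv⟩ := mem_nhds_prod_iff'.1 hW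
    obtain ⟨ε, hε, hball⟩ := Metric.mem_nhds_iff.1 (hv.mem_nhds htv)
    refine ⟨ε, hε, ?_⟩
    rintro c d hcd ⟨N, hNo, haN, L, hL, hlift, hbot⟩ hIcc
    obtain ⟨L', hL', hlift', hbot'⟩ := ext_step (f := f) hH e hcd
      (N := N ∩ u)
      (fun b hb s hs => huv ⟨hb.2, hball (hIcc s hs)⟩)
      (hL.mono (prod_mono inter_subset_left (subset_refl _)))
      (fun b hb s hs => hlift b hb.1 s hs) (fun b hb => hbot b hb.1)
    exact ⟨N ∩ u, hNo.inter hu, ⟨haN, hau⟩, L', hL', hlift', hbot'⟩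
  have hclosed : IsClosed T := by
    refine isClosed_of_closure_subset ?_
    intro t ht
    obtain ⟨ε, hε, hstep'⟩ := hstep t
    obtain ⟨t', ht'T, ht'd⟩ := Metric.mem_closure_iff.1 ht ε hε
    rcases le_total t t' with h | h
    · exact hdown t' ht'T t h
    · refine hstep' t' t h ht'T ?_
      intro s hs
      rw [Subtype.dist_eq, Real.dist_eq] at ht'd
      rw [Metric.mem_ball, Subtype.dist_eq, Real.dist_eq]
      have h1 : (t' : ℝ) ≤ s := hs.1
      have h2 : (s : ℝ) ≤ t := hs.2
      have h3 : (t' : ℝ) ≤ t := h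
      rw [abs_of_nonpos (by linarith)]
      rw [abs_of_nonneg (by linarith)] at ht'd
      linarith
  have hopen : IsOpen T := by
    rw [isOpen_iff_mem_nhds]
    intro t htT
    obtain ⟨ε, hε, hstep'⟩ := hstep t
    rcases le_or_gt 1 (t : ℝ) with h1 | h1
    · have hTuniv : T = univ := eq_univ_of_forall fun s =>
        hdown t htT s (Subtype.coe_le_coe.1 (le_trans s.2.2 h1))
      rw [hTuniv]
      exact Filter.univ_mem
    · have hd0 : (0 : ℝ) ≤ min 1 ((t : ℝ) + ε / 2) :=
        le_min zero_le_one (by have := t.2.1; linarith)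
      set d : I := ⟨min 1 ((t : ℝ) + ε / 2), hd0, min_le_left _ _⟩ with hd_def
      have htd : (t : ℝ) < (d : ℝ) := lt_min h1 (by linarith)
      have hdT : d ∈ T := by
        refine hstep' t d (Subtype.coe_le_coe.1 htd.le) htT ?_
        intro s hs
        rw [Metric.mem_ball, Subtype.dist_eq, Real.dist_eq]
        have h1' : (t : ℝ) ≤ s := hs.1
        have h2' : (s : ℝ) ≤ d := hs.2
        have hd2 : (d : ℝ) ≤ (t : ℝ) + ε / 2 := min_le_right _ _
        rw [abs_of_nonneg (by linarith)]
        linarith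
      refine Filter.mem_of_superset
        (IsOpen.mem_nhds (isOpen_lt continuous_subtype_val continuous_const) htd) ?_
      intro s hs
      exact hdown d hdT s (Subtype.coe_le_coe.1 (le_of_lt hs))
  have hT1 : (1 : I) ∈ T := by
    have hTuniv : T = univ := IsClopen.eq_univ ⟨hclosed, hopen⟩ ⟨0, h0T⟩
    rw [hTuniv]
    exact mem_univ _
  obtain ⟨N, hNo, haN, L, hL, hlift, hbot⟩ := hT1
  exact ⟨N, hNo, haN, L, hL, fun b hb =>
    ⟨fun t => hlift b hb t unitInterval.le_one', hbot b hb⟩⟩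

lemma hlp (hp : IsCoveringMap p) (hH : Continuous H) (hf : Continuous f)
    (h0 : ∀ a, p (f a) = H (a, 0)) :
    ∃ K : A × I → Y, Continuous K ∧ (∀ z, p (K z) = H z) ∧ ∀ a, K (a, 0) = f a := by
  classical
  choose N hNo haN L hL hprop using fun a => local_lift hp hH hf h0 a
  have hslice : ∀ a b, b ∈ N a → (fun t => L a (b, t)) = fun t => L b (b, t) := by
    intro a b hb
    have hc : ∀ a', b ∈ N a' → Continuous fun t => L a' (b, t) := by
      intro a' hb'
      rw [← continuousOn_univ]
      refine (hL a').comp (Continuous.continuousOn (by continuity)) ?_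
      intro t _
      exact ⟨hb', mem_univ _⟩
    refine hp.eq_of_comp_eq (hc a hb) (hc b (haN b)) ?_ 0 ?_
    · funext t
      show p (L a (b, t)) = p (L b (b, t))
      rw [(hprop a b hb).1 t, (hprop b b (haN b)).1 t]
    · rw [(hprop a b hb).2, (hprop b b (haN b)).2]
  refine ⟨fun z => L z.1 z, ?_, fun z => (hprop z.1 z.1 (haN z.1)).1 z.2, fun a =>
    (hprop a a (haN a)).2⟩
  rw [continuous_iff_continuousAt]
  rintro ⟨a, t⟩
  have hopen : IsOpen (N a ×ˢ (univ : Set I)) := (hNo a).prod isOpen_univ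
  have hCA : ContinuousAt (L a) (a, t) :=
    (hL a).continuousAt (hopen.mem_nhds ⟨haN a, mem_univ _⟩)
  refine hCA.congr ?_
  refine Filter.eventuallyEq_of_mem (hopen.mem_nhds ⟨haN a, mem_univ _⟩) ?_
  rintro ⟨b, s⟩ ⟨hb, -⟩
  show L a (b, s) = L b (b, s)
  exact congrFun (hslice a b hb) s

lemma lift_path (hp : IsCoveringMap p) {x₀ x₁ : X} (γ : Path x₀ x₁) (y₀ : Y)
    (hy₀ : p y₀ = x₀) :
    ∃ Γ : I → Y, Continuous Γ ∧ (∀ t, p (Γ t) = γ t) ∧ Γ 0 = y₀ := by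
  obtain ⟨K, hKc, hKl, hK0⟩ := hlp (A := PUnit.{1}) hp
    (H := fun z => γ z.2) (γ.continuous.comp continuous_snd)
    (f := fun _ => y₀) continuous_const
    (fun _ => by show p y₀ = γ 0; rw [hy₀, γ.source])
  exact ⟨fun t => K (PUnit.unit, t), hKc.comp (by continuity), fun t => hKl _,
    hK0 PUnit.unit⟩

lemma end_eq [SimplyConnectedSpace X] (hp : IsCoveringMap p) {x₀ x₁ : X}
    (γ₀ γ₁ : Path x₀ x₁) {y₀ : Y} {Γ₀ Γ₁ : I → Y}
    (hc₀ : Continuous Γ₀) (hc₁ : Continuous Γ₁)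
    (hl₀ : ∀ t, p (Γ₀ t) = γ₀ t) (hl₁ : ∀ t, p (Γ₁ t) = γ₁ t)
    (h00 : Γ₀ 0 = y₀) (h10 : Γ₁ 0 = y₀) : Γ₀ 1 = Γ₁ 1 := by
  obtain ⟨Hty⟩ := SimplyConnectedSpace.paths_homotopic γ₀ γ₁
  have hy₀ : p y₀ = x₀ := by rw [← h00, hl₀ 0, γ₀.source]
  obtain ⟨K, hKc, hKl, hK0⟩ := hlp (A := I) hp
    (H := fun z => Hty (z.1, z.2)) (Hty.continuous.comp (by continuity))
    (f := fun _ => y₀) continuous_const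
    (fun s => by show p y₀ = Hty (s, 0); rw [hy₀]; exact (Hty.source s).symm)
  have hs0 : (fun t => K (0, t)) = Γ₀ := by
    refine hp.eq_of_comp_eq (hKc.comp (by continuity)) hc₀ ?_ 0 ?_
    · funext t
      show p (K (0, t)) = p (Γ₀ t)
      rw [hKl (0, t), hl₀ t]
      exact Hty.apply_zero t
    · rw [hK0 0, h00]
  have hs1 : (fun t => K (1, t)) = Γ₁ := by
    refine hp.eq_of_comp_eq (hKc.comp (by fun_prop)) hc₁ ?_ 0 ?_
    · funext t
      show p (K (1, t)) = p (Γ₁ t)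
      rw [hKl (1, t), hl₁ t]
      exact Hty.apply_one t
    · rw [hK0 1, h10]
  have htop : ∀ s : I, p (K (s, 1)) = x₁ := fun s => by
    rw [hKl (s, 1)]
    exact Hty.target s
  set g : I → ↥(p ⁻¹' {x₁}) := fun s => ⟨K (s, 1), htop s⟩ with hg_def
  have hgc : Continuous g := (hKc.comp (by continuity)).subtype_mk _
  haveI : DiscreteTopology ↥(p ⁻¹' {x₁}) := (hp x₁).1
  have hglc : IsLocallyConstant g := fun s => (isOpen_discrete s).preimage hgc
  have := hglc.apply_eq_of_preconnectedSpace 0 1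
  have hK01 : K (0, 1) = K (1, 1) := congrArg Subtype.val this
  rw [← congrFun hs0 1, ← congrFun hs1 1, hK01]

lemma exists_section [SimplyConnectedSpace X] [LocallyPathConnectedSpace X]
    (hp : IsCoveringMap p) (x₀ : X) (y₀ : Y) (hy₀ : p y₀ = x₀) :
    ∃ s : X → Y, Continuous s ∧ (∀ x, p (s x) = x) ∧ s x₀ = y₀ := by
  classical
  set γ : ∀ x : X, Path x₀ x := fun x => PathConnectedSpace.somePath x₀ x with hγ_def
  choose Γ hΓc hΓl hΓ0 using fun x => lift_path hp (γ x) y₀ hy₀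
  set s : X → Y := fun x => Γ x 1 with hs_def
  have hsec : ∀ x, p (s x) = x := fun x => by rw [hs_def]; rw [hΓl x 1]; exact (γ x).target
  have hs₀ : s x₀ = y₀ := by
    have := end_eq hp (γ x₀) (Path.refl x₀) (hΓc x₀) (continuous_const : Continuous fun _ : I => y₀)
      (hΓl x₀) (fun t => by simp [hy₀]) (hΓ0 x₀) rfl
    exact this
  refine ⟨s, ?_, hsec, hs₀⟩
  rw [continuous_iff_continuousAt]
  intro x₁
  haveI : Nonempty ↥(p ⁻¹' {x₁}) := ⟨⟨s x₁, hsec x₁⟩⟩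
  set e := (hp x₁).toTrivialization with he_def
  have hxb : x₁ ∈ e.baseSet := (hp x₁).mem_toTrivialization_baseSet
  set U' := pathComponentIn e.baseSet x₁ with hU'_def
  have hU'o : IsOpen U' := IsOpen.pathComponentIn e.open_baseSet x₁
  have hx₁U' : x₁ ∈ U' := mem_pathComponentIn_self hxb
  have hU'sub : U' ⊆ e.baseSet := pathComponentIn_subset
  have hU'pc : IsPathConnected U' := isPathConnected_pathComponentIn hxb
  set sloc : X → Y := fun x => e.toPartialHomeomorph.symm (x, (e (s x₁)).2) with hsloc_def
  have hsrc : s x₁ ∈ e.source := e.mem_source.2 (by rw [hsec x₁]; exact hxb)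
  have hslocx₁ : sloc x₁ = s x₁ := by
    have h3 := e.symm_apply_mk_proj hsrc
    rw [hsec x₁] at h3
    exact h3
  have hslocsec : ∀ x ∈ e.baseSet, p (sloc x) = x := fun x hx =>
    e.proj_symm_apply (e.mem_target.2 hx)
  have hsloccont : ContinuousOn sloc e.baseSet := by
    refine e.toPartialHomeomorph.continuousOn_symm.comp
      ((continuous_id.prodMk continuous_const).continuousOn) ?_
    intro x hx
    exact e.mem_target.2 hx
  have claim : ∀ x ∈ U', s x = sloc x := by
    intro x hx
    obtain ⟨δ, hδ⟩ := hU'pc.joinedIn x₁ hx₁U' x hx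
    set Γ₁ : Path y₀ (s x₁) := ⟨⟨Γ x₁, hΓc x₁⟩, hΓ0 x₁, rfl⟩ with hΓ₁_def
    have hΔc : Continuous fun t => sloc (δ t) :=
      hsloccont.comp_continuous δ.continuous fun t => hU'sub (hδ t)
    set Δ : Path (s x₁) (sloc x) := ⟨⟨fun t => sloc (δ t), hΔc⟩,
      by show sloc (δ 0) = s x₁; rw [δ.source]; exact hslocx₁,
      by show sloc (δ 1) = sloc x; rw [δ.target]⟩ with hΔ_def
    have hliftc : ∀ t, p ((Γ₁.trans Δ) t) = ((γ x₁).trans δ) t := by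
      intro t
      rw [Path.trans_apply, Path.trans_apply]
      split_ifs with h
      · exact hΓl x₁ _
      · exact hslocsec _ (hU'sub (hδ _))
    have hend := end_eq hp (γ x) ((γ x₁).trans δ) (hΓc x) (Γ₁.trans Δ).continuous
      (hΓl x) hliftc (hΓ0 x) (Γ₁.trans Δ).source
    calc s x = (Γ₁.trans Δ) 1 := hend
    _ = sloc x := (Γ₁.trans Δ).target
  refine (hsloccont.continuousAt (e.open_baseSet.mem_nhds hxb)).congr ?_
  exact Filter.eventuallyEq_of_mem (hU'o.mem_nhds hx₁U') fun x hx => (claim x hx).symm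

lemma section_eq_local [LocallyPathConnectedSpace X] (hp : IsCoveringMap p) {s : X → Y}
    (hs : Continuous s) (hsec : ∀ x, p (s x) = x) (x₁ : X) [Nonempty ↥(p ⁻¹' {x₁})] :
    ∀ x ∈ pathComponentIn ((hp x₁).toTrivialization.baseSet) x₁,
      s x = (hp x₁).toTrivialization.toPartialHomeomorph.symm
        (x, ((hp x₁).toTrivialization (s x₁)).2) := by
  classical
  set e := (hp x₁).toTrivialization with he_def
  have hxb : x₁ ∈ e.baseSet := (hp x₁).mem_toTrivialization_baseSet
  set U' := pathComponentIn e.baseSet x₁ with hU'_def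
  have hx₁U' : x₁ ∈ U' := mem_pathComponentIn_self hxb
  have hU'sub : U' ⊆ e.baseSet := pathComponentIn_subset
  haveI : DiscreteTopology ↥(p ⁻¹' {x₁}) := (hp x₁).1
  have hU'pre : IsPreconnected U' :=
    (isPathConnected_pathComponentIn hxb).isConnected.isPreconnected
  haveI := Subtype.preconnectedSpace hU'pre
  have hsrc : ∀ x ∈ U', s x ∈ e.source := fun x hx =>
    e.mem_source.2 (by rw [hsec x]; exact hU'sub hx)
  set g : ↥U' → ↥(p ⁻¹' {x₁}) := fun u => (e (s u)).2 with hg_def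
  have hgc : Continuous g := by
    have hcOn : ContinuousOn (fun x => (e (s x)).2) U' :=
      continuous_snd.comp_continuousOn
        (e.toPartialHomeomorph.continuousOn.comp hs.continuousOn hsrc)
    exact hcOn.restrict
  have hglc : IsLocallyConstant g := fun s' => (isOpen_discrete s').preimage hgc
  intro x hx
  have hgeq : (e (s x)).2 = (e (s x₁)).2 :=
    hglc.apply_eq_of_preconnectedSpace ⟨x, hx⟩ ⟨x₁, hx₁U'⟩
  have h3 := e.symm_apply_mk_proj (hsrc x hx)
  rw [hsec x, hgeq] at h3
  exact h3.symm

lemma continuous_uncurry_of_discrete {J Z W : Type*} [TopologicalSpace J] [DiscreteTopology J]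
    [TopologicalSpace Z] [TopologicalSpace W] {f : J → Z → W} (hf : ∀ j, Continuous (f j)) :
    Continuous (fun z : J × Z => f z.1 z.2) := by
  rw [continuous_iff_continuousAt]
  rintro ⟨j, x⟩
  unfold ContinuousAt
  rw [nhds_prod_eq, nhds_discrete, Filter.pure_prod, Filter.tendsto_map'_iff]
  exact (hf j).continuousAt

lemma continuous_of_isEmpty {Z W : Type*} [TopologicalSpace Z] [TopologicalSpace W] [IsEmpty Z]
    (f : Z → W) : Continuous f :=
  continuous_iff_continuousAt.2 fun a => isEmptyElim a

lemma empty_homeo {Y X J : Type*} [TopologicalSpace Y] [TopologicalSpace X]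
    (tJ : TopologicalSpace J) [IsEmpty Y] [IsEmpty J] (p : Y → X) :
    ∃ h : @Homeomorph Y (J × X) _ (@instTopologicalSpaceProd _ _ tJ _), ∀ y, (h y).2 = p y := by
  letI := tJ
  haveI : IsEmpty (J × X) := inferInstance
  refine ⟨⟨Equiv.equivOfIsEmpty Y (J × X), ?_, ?_⟩, fun y => isEmptyElim y⟩
  · exact continuous_of_isEmpty _
  · exact continuous_of_isEmpty _

lemma continuous_of_locally_const {Z J : Type*} [TopologicalSpace Z] [TopologicalSpace J]
    [DiscreteTopology J] {f : Z → J} (h : ∀ z, ∀ᶠ z' in 𝓝 z, f z' = f z) : Continuous f := by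
  rw [continuous_iff_continuousAt]
  intro z
  unfold ContinuousAt
  rw [nhds_discrete J]
  exact Filter.tendsto_pure.2 (h z)

end CoveringTrivAux

universe u

/-- If `p : Y → X` is a local homeomorphism and a covering map, and `X` is simply connected
and locally path-connected, then `p` is a trivial covering: `Y` is homeomorphic over `X` to a
disjoint union of copies of `X` indexed by some (discrete) set `J`. -/
theorem coveringMap_trivial_of_simplyConnected {Y X : Type u} [TopologicalSpace Y]
    [TopologicalSpace X] [SimplyConnectedSpace X] [LocallyPathConnectedSpace X]
    (p : Y → X) (hloc : IsLocalHomeomorph p) (hp : IsCoveringMap p) :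
    ∃ (J : Type u),
      letI : TopologicalSpace J := ⊥
      ∃ h : Y ≃ₜ J × X, ∀ y, (h y).2 = p y := by
  classical
  by_cases hX : Nonempty X
  · obtain ⟨x₀⟩ := hX
    choose S hSc hSsec hSpt using fun y : Y => CoveringTrivAux.exists_section hp (p y) y rfl
    choose sl hslc hslsec hslpt using fun j : ↥(p ⁻¹' {x₀}) =>
      CoveringTrivAux.exists_section hp x₀ j.1 j.2
    have uniq : ∀ s₁ s₂ : X → Y, Continuous s₁ → Continuous s₂ → (∀ x, p (s₁ x) = x) →
        (∀ x, p (s₂ x) = x) → ∀ x₂, s₁ x₂ = s₂ x₂ → s₁ = s₂ := fun s₁ s₂ h₁ h₂ hp₁ hp₂ x₂ hx₂ =>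
      hp.eq_of_comp_eq h₁ h₂
        (funext fun x' => by show p (s₁ x') = p (s₂ x'); rw [hp₁ x', hp₂ x']) x₂ hx₂
    have hSloc : ∀ y : Y, ∀ᶠ y' in 𝓝 y, S y' = S y := by
      intro y
      haveI : Nonempty ↥(p ⁻¹' {p y}) := ⟨⟨y, rfl⟩⟩
      set e := (hp (p y)).toTrivialization with he
      have hxb : p y ∈ e.baseSet := (hp (p y)).mem_toTrivialization_baseSet
      set U' := pathComponentIn e.baseSet (p y) with hU'
      have hU'o : IsOpen U' := IsOpen.pathComponentIn e.open_baseSet _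
      have hyU' : p y ∈ U' := mem_pathComponentIn_self hxb
      have hysrc : y ∈ e.source := e.mem_source.2 hxb
      haveI : DiscreteTopology ↥(p ⁻¹' {p y}) := (hp (p y)).1
      set V := e.source ∩ ⇑e ⁻¹' (U' ×ˢ ({(e y).2} : Set ↥(p ⁻¹' {p y}))) with hV
      have hVo : IsOpen V :=
        e.toOpenPartialHomeomorph.isOpen_inter_preimage (hU'o.prod (isOpen_discrete _))
      have hyV : y ∈ V := ⟨hysrc, ⟨by rw [e.coe_fst hysrc]; exact hyU', rfl⟩⟩
      refine Filter.eventually_of_mem (hVo.mem_nhds hyV) ?_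
      rintro y' ⟨hy'src, hy'pre⟩
      have h1 : p y' ∈ U' := by rw [← e.coe_fst hy'src]; exact hy'pre.1
      have h2 : (e y').2 = (e y).2 := hy'pre.2
      have hSyU' := CoveringTrivAux.section_eq_local hp (hSc y) (hSsec y) (p y)
      have hkey : S y (p y') = y' := by
        have hx' := hSyU' (p y') h1
        rw [hSpt y] at hx'
        rw [hx', ← h2]
        exact e.symm_apply_mk_proj hy'src
      exact uniq (S y') (S y) (hSc y') (hSc y) (hSsec y') (hSsec y) (p y')
        (by rw [hSpt y', hkey])
    refine ⟨↥(p ⁻¹' {x₀}), ?_⟩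
    letI tJ : TopologicalSpace ↥(p ⁻¹' {x₀}) := ⊥
    haveI hdisc : DiscreteTopology ↥(p ⁻¹' {x₀}) := discreteTopology_bot _
    set τ : Y → ↥(p ⁻¹' {x₀}) × X :=
      fun y => (⟨S y x₀, hSsec y x₀⟩, p y) with hτ
    set φ : ↥(p ⁻¹' {x₀}) × X → Y := fun z => sl z.1 z.2 with hφ
    have linv : Function.LeftInverse φ τ := by
      intro y
      have heq : sl ⟨S y x₀, hSsec y x₀⟩ = S y :=
        uniq _ _ (hslc _) (hSc y) (hslsec _) (hSsec y) x₀ (hslpt _)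
      show sl _ (p y) = y
      rw [heq]
      exact hSpt y
    have rinv : Function.RightInverse φ τ := by
      rintro ⟨j, x⟩
      have hSeq : S (sl j x) = sl j := by
        refine uniq _ _ (hSc _) (hslc j) (hSsec _) (hslsec j) x ?_
        have h4 := hSpt (sl j x)
        rwa [hslsec j x] at h4
      refine Prod.ext (Subtype.ext ?_) ?_
      · show S (sl j x) x₀ = j.1
        rw [hSeq]
        exact hslpt j
      · exact hslsec j x
    have hτc : Continuous τ := by
      refine Continuous.prodMk ?_ hp.continuous
      refine CoveringTrivAux.continuous_of_locally_const ?_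
      intro y
      refine (hSloc y).mono fun y' h => ?_
      exact Subtype.ext (by show S y' x₀ = S y x₀; rw [h])
    have hφc : Continuous φ := CoveringTrivAux.continuous_uncurry_of_discrete hslc
    exact ⟨⟨⟨τ, φ, linv, rinv⟩, hτc, hφc⟩, fun y => rfl⟩
  · haveI : IsEmpty X := not_nonempty_iff.1 hX
    haveI : IsEmpty Y := ⟨fun y => IsEmpty.false (p y)⟩
    refine ⟨Y, ?_⟩
    exact CoveringTrivAux.empty_homeo ⊥ p
end

section
/- Let X be a topological space which is the union of two closed subspaces Z₁ and Z₂ with intersection Z. Given local homeomorphisms E₁ → Z₁ and E₂ → Z₂ together with a homeomorphism over Z between their restrictions to Z, the space obtained by gluing E₁ and E₂ along this identification admits a natural local homeomorphism to X restricting to the given ones on Z₁ and Z₂. -/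
open Set Topology

set_option linter.unusedSectionVars false

section glueAux

variable {X E₁ E₂ : Type*} [TopologicalSpace X] [TopologicalSpace E₁] [TopologicalSpace E₂]
  {Z₁ Z₂ : Set X} {p₁ : E₁ → Z₁} {p₂ : E₂ → Z₂}

/-- The gluing relation. -/
abbrev glueRel (p₁ : E₁ → Z₁) (p₂ : E₂ → Z₂)
    (φ : {e : E₁ // (p₁ e : X) ∈ Z₂} ≃ₜ {e : E₂ // (p₂ e : X) ∈ Z₁}) :
    E₁ ⊕ E₂ → E₁ ⊕ E₂ → Prop :=
  fun a b => ∃ e : {e : E₁ // (p₁ e : X) ∈ Z₂}, a = Sum.inl e.1 ∧ b = Sum.inr (φ e).1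

variable (φ : {e : E₁ // (p₁ e : X) ∈ Z₂} ≃ₜ {e : E₂ // (p₂ e : X) ∈ Z₁})

lemma glue_lift_ok (hφ : ∀ e, ((p₂ (φ e).1 : X)) = ((p₁ e.1 : X))) :
    ∀ a b, glueRel p₁ p₂ φ a b →
      Sum.elim (fun e => (p₁ e : X)) (fun e => (p₂ e : X)) a
        = Sum.elim (fun e => (p₁ e : X)) (fun e => (p₂ e : X)) b := by
  rintro _ _ ⟨c, rfl, rfl⟩
  exact (hφ c).symm

lemma glue_eq_iff {a b : E₁ ⊕ E₂} :
    Quot.mk (glueRel p₁ p₂ φ) a = Quot.mk (glueRel p₁ p₂ φ) b ↔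
      a = b ∨ (∃ c, a = Sum.inl c.1 ∧ b = Sum.inr (φ c).1) ∨
        (∃ c, b = Sum.inl c.1 ∧ a = Sum.inr (φ c).1) := by
  constructor
  · intro h
    have h' := Quot.eq.1 h
    clear h
    induction h' with
    | rel x y hxy => exact Or.inr (Or.inl hxy)
    | refl x => exact Or.inl rfl
    | symm x y _ ih =>
      rcases ih with rfl | hc | hc
      · exact Or.inl rfl
      · exact Or.inr (Or.inr hc)
      · exact Or.inr (Or.inl hc)
    | trans x y z _ _ ih₁ ih₂ =>
      rcases ih₁ with rfl | ⟨c, rfl, rfl⟩ | ⟨c, hc1, hc2⟩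
      · exact ih₂
      · rcases ih₂ with rfl | ⟨c', hc1', _⟩ | ⟨c', hc1', hc2'⟩
        · exact Or.inr (Or.inl ⟨c, rfl, rfl⟩)
        · exact absurd hc1' (by simp)
        · have : φ c' = φ c := Subtype.ext (Sum.inr.inj hc2').symm
          have hcc : c' = c := φ.toEquiv.injective this
          exact Or.inl (by rw [hc1', hcc])
      · subst hc1
        rcases ih₂ with rfl | ⟨c', hc1', hc2'⟩ | ⟨c', hc1', hc2'⟩
        · exact Or.inr (Or.inr ⟨c, rfl, hc2⟩)
        · have hcc : c' = c := Subtype.ext (Sum.inl.inj hc1').symm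
          subst hcc
          exact Or.inl (hc2.trans hc2'.symm)
        · exact absurd hc2' (by simp)
  · rintro (rfl | ⟨c, rfl, rfl⟩ | ⟨c, rfl, rfl⟩)
    · rfl
    · exact Quot.sound ⟨c, rfl, rfl⟩
    · exact (Quot.sound ⟨c, rfl, rfl⟩).symm

lemma glue_aux (hφ : ∀ e, ((p₂ (φ e).1 : X)) = ((p₁ e.1 : X)))
    {Ω₁ : Set E₁} {Ω₂ : Set E₂} (hO₁ : IsOpen Ω₁) (hO₂ : IsOpen Ω₂)
    (hinj₁ : Set.InjOn (fun e => (p₁ e : X)) Ω₁)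
    (hinj₂ : Set.InjOn (fun e => (p₂ e : X)) Ω₂)
    (S1 : ∀ e' (h : (p₁ e' : X) ∈ Z₂), e' ∈ Ω₁ → (φ ⟨e', h⟩).1 ∈ Ω₂)
    (S2 : ∀ f ∈ Ω₂, ((p₂ f : X) ∈ Z₁) → ∃ c, c.1 ∈ Ω₁ ∧ (φ c).1 = f) :
    IsOpen (Quot.mk (glueRel p₁ p₂ φ) '' (Sum.inl '' Ω₁ ∪ Sum.inr '' Ω₂)) ∧
      Set.InjOn (Quot.lift (Sum.elim (fun e => (p₁ e : X)) fun e => (p₂ e : X))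
          (glue_lift_ok φ hφ))
        (Quot.mk (glueRel p₁ p₂ φ) '' (Sum.inl '' Ω₁ ∪ Sum.inr '' Ω₂)) := by
  have hpre : Quot.mk (glueRel p₁ p₂ φ) ⁻¹' (Quot.mk (glueRel p₁ p₂ φ) ''
      (Sum.inl '' Ω₁ ∪ Sum.inr '' Ω₂)) = Sum.inl '' Ω₁ ∪ Sum.inr '' Ω₂ := by
    apply Subset.antisymm
    · rintro a ha
      obtain ⟨b, hb, hba⟩ := ha
      rcases (glue_eq_iff φ).1 hba with rfl | ⟨c, rfl, rfl⟩ | ⟨c, hc1, hc2⟩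
      · exact hb
      · -- b = inl c.1 ∈ U, a = inr (φ c).1
        rcases hb with ⟨e, he, heq⟩ | ⟨f, _, heq⟩
        · have : e = c.1 := Sum.inl.inj heq
          subst this
          exact Or.inr ⟨(φ c).1, S1 c.1 c.2 he, rfl⟩
        · exact absurd heq (by simp)
      · -- a = inr (φ c).1? no: b = inl c.1, a = inr (φ c).1  (third disjunct: b = inl c.1 ∧ a = inr (φ c).1)
        subst hc1; subst hc2
        rcases hb with ⟨e, he, heq⟩ | ⟨f, hf, heq⟩
        · exact absurd heq (by simp)
        · have hfc : f = (φ c).1 := Sum.inr.inj heq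
          subst hfc
          have hz : ((p₂ (φ c).1 : X)) ∈ Z₁ := by rw [hφ c]; exact (p₁ c.1).2
          obtain ⟨c', hc', hcf⟩ := S2 (φ c).1 hf hz
          have : φ c' = φ c := Subtype.ext hcf
          have hcc : c' = c := φ.toEquiv.injective this
          exact Or.inl ⟨c.1, hcc ▸ hc', rfl⟩
    · exact Set.subset_preimage_image _ _
  constructor
  · rw [← isQuotientMap_quot_mk.isOpen_preimage, hpre, isOpen_sum_iff]
    constructor
    · have : Sum.inl ⁻¹' (Sum.inl '' Ω₁ ∪ Sum.inr '' Ω₂ : Set (E₁ ⊕ E₂)) = Ω₁ := by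
        simp [Set.preimage_union, Set.preimage_image_eq _ Sum.inl_injective]
      rwa [this]
    · have : Sum.inr ⁻¹' (Sum.inl '' Ω₁ ∪ Sum.inr '' Ω₂ : Set (E₁ ⊕ E₂)) = Ω₂ := by
        simp [Set.preimage_union, Set.preimage_image_eq _ Sum.inr_injective]
      rwa [this]
  · have key : ∀ e ∈ Ω₁, ∀ f ∈ Ω₂, (p₁ e : X) = (p₂ f : X) →
        Quot.mk (glueRel p₁ p₂ φ) (Sum.inl e) = Quot.mk (glueRel p₁ p₂ φ) (Sum.inr f) := by
      intro e he f hf hq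
      have h : (p₁ e : X) ∈ Z₂ := hq ▸ (p₂ f).2
      have hmem := S1 e h he
      have hval : ((p₂ (φ ⟨e, h⟩).1 : X)) = ((p₂ f : X)) := by rw [hφ ⟨e, h⟩]; exact hq
      have : (φ ⟨e, h⟩).1 = f := hinj₂ hmem hf hval
      exact Quot.sound ⟨⟨e, h⟩, rfl, by rw [this]⟩
    rintro t ht t' ht' hq
    obtain ⟨b, hb, rfl⟩ := ht
    obtain ⟨b', hb', rfl⟩ := ht'
    rcases hb with ⟨e, he, rfl⟩ | ⟨f, hf, rfl⟩ <;> rcases hb' with ⟨e', he', rfl⟩ | ⟨f', hf', rfl⟩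
    · have : e = e' := hinj₁ he he' hq
      rw [this]
    · exact key e he f' hf' hq
    · exact (key e' he' f hf hq.symm).symm
    · have : f = f' := hinj₂ hf hf' hq
      rw [this]

lemma glue_sat (hp₁ : IsLocalHomeomorph p₁) (hp₂ : IsLocalHomeomorph p₂)
    (hφ : ∀ e, ((p₂ (φ e).1 : X)) = ((p₁ e.1 : X)))
    (e : E₁) (h₂ : (p₁ e : X) ∈ Z₂) :
    ∃ (Ω₁ : Set E₁) (Ω₂ : Set E₂), IsOpen Ω₁ ∧ IsOpen Ω₂ ∧ e ∈ Ω₁ ∧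
      Set.InjOn (fun e => (p₁ e : X)) Ω₁ ∧ Set.InjOn (fun e => (p₂ e : X)) Ω₂ ∧
      (∀ e' (h : (p₁ e' : X) ∈ Z₂), e' ∈ Ω₁ → (φ ⟨e', h⟩).1 ∈ Ω₂) ∧
      (∀ f ∈ Ω₂, ((p₂ f : X) ∈ Z₁) → ∃ c, c.1 ∈ Ω₁ ∧ (φ c).1 = f) := by
  obtain ⟨f₁, he₁, hpf₁⟩ := hp₁ e
  set e₂ : E₂ := (φ ⟨e, h₂⟩).1 with he₂def
  obtain ⟨f₂, he₂, hpf₂⟩ := hp₂ e₂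
  -- the open set A ⊆ E₁ cutting out where φ lands in f₂.source
  have hSopen : IsOpen {c : {e : E₁ // (p₁ e : X) ∈ Z₂} | (φ c).1 ∈ f₂.source} :=
    f₂.open_source.preimage (continuous_subtype_val.comp φ.continuous)
  obtain ⟨A, hA, hAeq⟩ := isOpen_induced_iff.mp hSopen
  have hAiff : ∀ c : {e : E₁ // (p₁ e : X) ∈ Z₂}, c.1 ∈ A ↔ (φ c).1 ∈ f₂.source := by
    intro c
    constructor
    · intro hc
      have : c ∈ (Subtype.val ⁻¹' A : Set {e : E₁ // (p₁ e : X) ∈ Z₂}) := hc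
      rw [hAeq] at this
      exact this
    · intro hc
      have : c ∈ {c : {e : E₁ // (p₁ e : X) ∈ Z₂} | (φ c).1 ∈ f₂.source} := hc
      rw [← hAeq] at this
      exact this
  -- V' ⊆ Z₁ open, pull back to an open W₁' ⊆ X
  have hV' : IsOpen (f₁.target ∩ f₁.symm ⁻¹' A) := f₁.isOpen_inter_preimage_symm hA
  obtain ⟨W₁', hW₁', hW₁eq⟩ := isOpen_induced_iff.mp hV'
  obtain ⟨W₂', hW₂', hW₂eq⟩ := isOpen_induced_iff.mp f₂.open_target
  set W : Set X := W₁' ∩ W₂' with hWdef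
  refine ⟨f₁.source ∩ (fun e => (p₁ e : X)) ⁻¹' W,
    f₂.source ∩ (fun f => (p₂ f : X)) ⁻¹' W, ?_, ?_, ?_, ?_, ?_, ?_, ?_⟩
  · exact f₁.open_source.inter ((hW₁'.inter hW₂').preimage
      (continuous_subtype_val.comp hp₁.continuous))
  · exact f₂.open_source.inter ((hW₁'.inter hW₂').preimage
      (continuous_subtype_val.comp hp₂.continuous))
  · refine ⟨he₁, ?_, ?_⟩
    · -- (p₁ e : X) ∈ W₁'
      have h1 : p₁ e ∈ f₁.target := by rw [hpf₁]; exact f₁.map_source he₁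
      have h2 : f₁.symm (p₁ e) ∈ A := by
        have : f₁.symm (p₁ e) = e := by rw [hpf₁]; exact f₁.left_inv he₁
        rw [this]
        exact (hAiff ⟨e, h₂⟩).2 he₂
      have : p₁ e ∈ (Subtype.val ⁻¹' W₁' : Set Z₁) := by rw [hW₁eq]; exact ⟨h1, h2⟩
      exact this
    · -- (p₁ e : X) ∈ W₂'
      have h1 : p₂ e₂ ∈ f₂.target := by rw [hpf₂]; exact f₂.map_source he₂
      have : p₂ e₂ ∈ (Subtype.val ⁻¹' W₂' : Set Z₂) := by rw [hW₂eq]; exact h1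
      have h3 : ((p₂ e₂ : X)) ∈ W₂' := this
      rwa [hφ ⟨e, h₂⟩] at h3
  · intro a ha b hb hab
    have : p₁ a = p₁ b := Subtype.ext hab
    rw [hpf₁] at this
    exact f₁.injOn ha.1 hb.1 this
  · intro a ha b hb hab
    have : p₂ a = p₂ b := Subtype.ext hab
    rw [hpf₂] at this
    exact f₂.injOn ha.1 hb.1 this
  · -- S1
    intro e' h he'
    have hmem : p₁ e' ∈ (Subtype.val ⁻¹' W₁' : Set Z₁) := he'.2.1
    rw [hW₁eq] at hmem
    obtain ⟨htar, hsy⟩ := hmem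
    have hse : f₁.symm (p₁ e') = e' := by rw [hpf₁]; exact f₁.left_inv he'.1
    have hsy' : f₁.symm (p₁ e') ∈ A := hsy
    rw [hse] at hsy'
    refine ⟨(hAiff ⟨e', h⟩).1 hsy', ?_⟩
    have : ((p₂ (φ ⟨e', h⟩).1 : X)) = ((p₁ e' : X)) := hφ ⟨e', h⟩
    show ((p₂ (φ ⟨e', h⟩).1 : X)) ∈ W
    rw [this]
    exact he'.2
  · -- S2
    intro f hf h
    set z : Z₁ := ⟨(p₂ f : X), h⟩ with hzdef
    have hzW : z ∈ (Subtype.val ⁻¹' W₁' : Set Z₁) := hf.2.1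
    rw [hW₁eq] at hzW
    obtain ⟨hztar, hzA⟩ := hzW
    set a : E₁ := f₁.symm z with hadef
    have hpa : p₁ a = z := by rw [hpf₁]; exact f₁.right_inv hztar
    have haz₂ : (p₁ a : X) ∈ Z₂ := by rw [hpa]; exact (p₂ f).2
    set c : {e : E₁ // (p₁ e : X) ∈ Z₂} := ⟨a, haz₂⟩ with hcdef
    have hcA : c.1 ∈ A := hzA
    have hcs : (φ c).1 ∈ f₂.source := (hAiff c).1 hcA
    have hpv : ((p₂ (φ c).1 : X)) = ((p₂ f : X)) := by
      rw [hφ c]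
      show ((p₁ a : X)) = _
      rw [hpa]
    rcases hgc : φ c with ⟨g, hgZ⟩
    rw [hgc] at hcs hpv
    have hpv' : p₂ g = p₂ f := Subtype.ext hpv
    rw [hpf₂] at hpv'
    have hcf : g = f := f₂.injOn hcs hf.1 hpv'
    refine ⟨c, ⟨f₁.map_target hztar, ?_⟩, by rw [hgc]; exact hcf⟩
    show ((p₁ a : X)) ∈ W
    rw [hpa]
    exact hf.2

end glueAux

lemma open_of_closed_cover {X : Type*} [TopologicalSpace X] {Z₁ Z₂ : Set X}
    (hZ₁ : IsClosed Z₁) (hZ₂ : IsClosed Z₂) (hcov : Z₁ ∪ Z₂ = Set.univ) {S : Set X}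
    (h₁ : IsOpen ((↑) ⁻¹' S : Set Z₁)) (h₂ : IsOpen ((↑) ⁻¹' S : Set Z₂)) : IsOpen S := by
  rw [← isClosed_compl_iff]
  have hc₁ : IsClosed ((↑) ⁻¹' Sᶜ : Set Z₁) := by
    rw [Set.preimage_compl]; exact h₁.isClosed_compl
  have hc₂ : IsClosed ((↑) ⁻¹' Sᶜ : Set Z₂) := by
    rw [Set.preimage_compl]; exact h₂.isClosed_compl
  have him₁ : IsClosed (Subtype.val '' ((↑) ⁻¹' Sᶜ : Set Z₁)) :=
    hZ₁.isClosedEmbedding_subtypeVal.isClosedMap _ hc₁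
  have him₂ : IsClosed (Subtype.val '' ((↑) ⁻¹' Sᶜ : Set Z₂)) :=
    hZ₂.isClosedEmbedding_subtypeVal.isClosedMap _ hc₂
  have : Sᶜ = (Subtype.val '' ((↑) ⁻¹' Sᶜ : Set Z₁)) ∪ (Subtype.val '' ((↑) ⁻¹' Sᶜ : Set Z₂)) := by
    rw [Subtype.image_preimage_coe, Subtype.image_preimage_coe,
      ← Set.union_inter_distrib_right, hcov, Set.univ_inter]
  rw [this]
  exact him₁.union him₂

/-- Let `X = Z₁ ∪ Z₂` with `Z₁, Z₂` closed and `Z = Z₁ ∩ Z₂`. Given local homeomorphisms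
`p₁ : E₁ → Z₁` and `p₂ : E₂ → Z₂` together with a homeomorphism over `Z` between their
restrictions to `Z`, the space obtained by gluing `E₁` and `E₂` along this identification
admits a natural local homeomorphism to `X` restricting to the given ones on `Z₁`, `Z₂`. -/
theorem glue_etale_over_closed_union {X E₁ E₂ : Type u} [TopologicalSpace X]
    [TopologicalSpace E₁] [TopologicalSpace E₂]
    (Z₁ Z₂ : Set X) (hZ₁ : IsClosed Z₁) (hZ₂ : IsClosed Z₂) (hcov : Z₁ ∪ Z₂ = Set.univ)
    (p₁ : E₁ → Z₁) (p₂ : E₂ → Z₂)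
    (hp₁ : IsLocalHomeomorph p₁) (hp₂ : IsLocalHomeomorph p₂)
    (φ : {e : E₁ // (p₁ e : X) ∈ Z₂} ≃ₜ {e : E₂ // (p₂ e : X) ∈ Z₁})
    (hφ : ∀ e, ((p₂ (φ e).1 : X)) = ((p₁ e.1 : X))) :
    ∃ q : Quot (fun a b : E₁ ⊕ E₂ =>
        ∃ e : {e : E₁ // (p₁ e : X) ∈ Z₂}, a = Sum.inl e.1 ∧ b = Sum.inr (φ e).1) → X,
      (∀ e₁ : E₁, q (Quot.mk _ (Sum.inl e₁)) = (p₁ e₁ : X)) ∧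
      (∀ e₂ : E₂, q (Quot.mk _ (Sum.inr e₂)) = (p₂ e₂ : X)) ∧
      IsLocalHomeomorph q := by
  classical
  set q : Quot (glueRel p₁ p₂ φ) → X :=
    Quot.lift (Sum.elim (fun e => (p₁ e : X)) fun e => (p₂ e : X)) (glue_lift_ok φ hφ) with hqdef
  refine ⟨q, fun _ => rfl, fun _ => rfl, ?_⟩
  have hqc : Continuous q :=
    continuous_quot_lift _ ((continuous_subtype_val.comp hp₁.continuous).sumElim
      (continuous_subtype_val.comp hp₂.continuous))
  -- q is an open map
  have hqo : IsOpenMap q := by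
    intro O hO
    have hO₁ : IsOpen ((fun e => Quot.mk (glueRel p₁ p₂ φ) (Sum.inl e)) ⁻¹' O) :=
      hO.preimage (continuous_quot_mk.comp continuous_inl)
    have hO₂ : IsOpen ((fun e => Quot.mk (glueRel p₁ p₂ φ) (Sum.inr e)) ⁻¹' O) :=
      hO.preimage (continuous_quot_mk.comp continuous_inr)
    apply open_of_closed_cover hZ₁ hZ₂ hcov
    · have heq : ((↑) ⁻¹' (q '' O) : Set Z₁)
          = p₁ '' ((fun e => Quot.mk (glueRel p₁ p₂ φ) (Sum.inl e)) ⁻¹' O) := by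
        ext z
        constructor
        · rintro ⟨t, htO, hqt⟩
          obtain ⟨a, rfl⟩ := Quot.exists_rep t
          cases a with
          | inl e => exact ⟨e, htO, Subtype.ext hqt⟩
          | inr f =>
            have hz : (p₂ f : X) ∈ Z₁ := by rw [show (p₂ f : X) = (z : X) from hqt]; exact z.2
            set c := φ.symm ⟨f, hz⟩ with hcdef
            have hc : (φ c).1 = f := by rw [hcdef, φ.apply_symm_apply]
            have hmk : Quot.mk (glueRel p₁ p₂ φ) (Sum.inl c.1)
                = Quot.mk (glueRel p₁ p₂ φ) (Sum.inr f) := by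
              rw [← hc]; exact Quot.sound ⟨c, rfl, rfl⟩
            refine ⟨c.1, by rw [Set.mem_preimage, hmk]; exact htO, ?_⟩
            apply Subtype.ext
            show ((p₁ c.1 : X)) = (z : X)
            rw [← hφ c, hc]
            exact hqt
        · rintro ⟨e, he, rfl⟩
          exact ⟨Quot.mk _ (Sum.inl e), he, rfl⟩
      rw [heq]
      exact hp₁.isOpenMap _ hO₁
    · have heq : ((↑) ⁻¹' (q '' O) : Set Z₂)
          = p₂ '' ((fun e => Quot.mk (glueRel p₁ p₂ φ) (Sum.inr e)) ⁻¹' O) := by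
        ext z
        constructor
        · rintro ⟨t, htO, hqt⟩
          obtain ⟨a, rfl⟩ := Quot.exists_rep t
          cases a with
          | inr f => exact ⟨f, htO, Subtype.ext hqt⟩
          | inl e =>
            have hz : (p₁ e : X) ∈ Z₂ := by rw [show (p₁ e : X) = (z : X) from hqt]; exact z.2
            have hmk : Quot.mk (glueRel p₁ p₂ φ) (Sum.inr (φ ⟨e, hz⟩).1)
                = Quot.mk (glueRel p₁ p₂ φ) (Sum.inl e) :=
              (Quot.sound ⟨⟨e, hz⟩, rfl, rfl⟩).symm
            refine ⟨(φ ⟨e, hz⟩).1, by rw [Set.mem_preimage, hmk]; exact htO, ?_⟩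
            apply Subtype.ext
            show ((p₂ (φ ⟨e, hz⟩).1 : X)) = (z : X)
            rw [hφ ⟨e, hz⟩]
            exact hqt
        · rintro ⟨f, hf, rfl⟩
          exact ⟨Quot.mk _ (Sum.inr f), hf, rfl⟩
      rw [heq]
      exact hp₂.isOpenMap _ hO₂
  suffices hmain : ∀ t : Quot (glueRel p₁ p₂ φ), ∃ U ∈ nhds t,
      Topology.IsOpenEmbedding (U.restrict q) by
    exact isLocalHomeomorph_iff_isOpenEmbedding_restrict.mpr hmain
  -- given suitable Ω₁, Ω₂ we can conclude
  have finish : ∀ (t : Quot (glueRel p₁ p₂ φ)) (Ω₁ : Set E₁) (Ω₂ : Set E₂), IsOpen Ω₁ → IsOpen Ω₂ →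
      Set.InjOn (fun e => (p₁ e : X)) Ω₁ → Set.InjOn (fun e => (p₂ e : X)) Ω₂ →
      (∀ e' (h : (p₁ e' : X) ∈ Z₂), e' ∈ Ω₁ → (φ ⟨e', h⟩).1 ∈ Ω₂) →
      (∀ f ∈ Ω₂, ((p₂ f : X) ∈ Z₁) → ∃ c, c.1 ∈ Ω₁ ∧ (φ c).1 = f) →
      t ∈ Quot.mk (glueRel p₁ p₂ φ) '' (Sum.inl '' Ω₁ ∪ Sum.inr '' Ω₂) →
      ∃ U ∈ nhds t, Topology.IsOpenEmbedding (U.restrict q) := by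
    intro t Ω₁ Ω₂ hO₁ hO₂ hinj₁ hinj₂ S1 S2 htΩ
    obtain ⟨hopen, hinj⟩ := glue_aux φ hφ hO₁ hO₂ hinj₁ hinj₂ S1 S2
    refine ⟨_, hopen.mem_nhds htΩ, ?_⟩
    apply Topology.IsOpenEmbedding.of_continuous_injective_isOpenMap
    · exact hqc.comp continuous_subtype_val
    · intro a b hab
      exact Subtype.ext (hinj a.2 b.2 hab)
    · change IsOpenMap (q ∘ Subtype.val)
      exact hqo.comp hopen.isOpenMap_subtype_val
  -- reduce the `inr` over-Z case to the `inl` over-Z case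
  have inlCase : ∀ (e : E₁), (p₁ e : X) ∈ Z₂ →
      ∃ U ∈ nhds (Quot.mk (glueRel p₁ p₂ φ) (Sum.inl e)),
        Topology.IsOpenEmbedding (U.restrict q) := by
    intro e h₂
    obtain ⟨Ω₁, Ω₂, hO₁, hO₂, heΩ, hinj₁, hinj₂, S1, S2⟩ := glue_sat φ hp₁ hp₂ hφ e h₂
    exact finish _ Ω₁ Ω₂ hO₁ hO₂ hinj₁ hinj₂ S1 S2
      ⟨Sum.inl e, Or.inl ⟨e, heΩ, rfl⟩, rfl⟩
  intro t
  obtain ⟨a, rfl⟩ := Quot.exists_rep t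
  cases a with
  | inl e =>
    by_cases h₂ : (p₁ e : X) ∈ Z₂
    · exact inlCase e h₂
    · -- interior case in E₁
      obtain ⟨f₁, he₁, hpf₁⟩ := hp₁ e
      refine finish _ (f₁.source ∩ (fun e => (p₁ e : X)) ⁻¹' Z₂ᶜ) ∅
        (f₁.open_source.inter (hZ₂.isOpen_compl.preimage
          (continuous_subtype_val.comp hp₁.continuous)))
        isOpen_empty ?_ (Set.injOn_empty _) ?_ ?_
        ⟨Sum.inl e, Or.inl ⟨e, ⟨he₁, h₂⟩, rfl⟩, rfl⟩
      · intro x hx y hy hxy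
        have : p₁ x = p₁ y := Subtype.ext hxy
        rw [hpf₁] at this
        exact f₁.injOn hx.1 hy.1 this
      · intro e' h he'
        exact absurd h he'.2
      · intro f hf
        exact absurd hf (Set.notMem_empty f)
  | inr f =>
    by_cases h₁ : (p₂ f : X) ∈ Z₁
    · set c := φ.symm ⟨f, h₁⟩ with hcdef
      have hc : (φ c).1 = f := by rw [hcdef, φ.apply_symm_apply]
      have h₂ : (p₁ c.1 : X) ∈ Z₂ := by
        rw [← hφ c, hc]; exact (p₂ f).2
      have hmk : Quot.mk (glueRel p₁ p₂ φ) (Sum.inl c.1)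
          = Quot.mk (glueRel p₁ p₂ φ) (Sum.inr f) := by
        rw [← hc]; exact Quot.sound ⟨c, rfl, rfl⟩
      rw [← hmk]
      exact inlCase c.1 h₂
    · -- interior case in E₂
      obtain ⟨f₂, hf₂, hpf₂⟩ := hp₂ f
      refine finish _ ∅ (f₂.source ∩ (fun f => (p₂ f : X)) ⁻¹' Z₁ᶜ)
        isOpen_empty
        (f₂.open_source.inter (hZ₁.isOpen_compl.preimage
          (continuous_subtype_val.comp hp₂.continuous)))
        (Set.injOn_empty _) ?_ ?_ ?_
        ⟨Sum.inr f, Or.inr ⟨f, ⟨hf₂, h₁⟩, rfl⟩, rfl⟩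
      · intro x hx y hy hxy
        have : p₂ x = p₂ y := Subtype.ext hxy
        rw [hpf₂] at this
        exact f₂.injOn hx.1 hy.1 this
      · intro e' h he'
        exact absurd he' (Set.notMem_empty e')
      · intro g hg hgz
        exact absurd hgz hg.2
end
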